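/- For a strictly positive continuous function φ on a compact metric space with continuous T, the function s ↦ P_top(−sφ) is strictly decreasing and continuous on ℝ, tends to −∞ as s → ∞ and to +∞ as s → −∞ (when h_top(T) is finite and φ ≥ c > 0); hence Bowen's equation P_top(−sφ) = 0 has a unique solution provided h_top(T) ≥0, and the solution equals sup{h_μ(T)/∫φdμ : μ ∈ M(X,T)} when h_top(T) > 0. -/

import Mathlib

open Set Filter Topology MeasureTheory

noncomputable section

/-- The Kolmogorov–Sinai entropy of `μ`: supremum over finite measurable partitions of
the exponential growth rate of the entropy of the refined partitions. -/
def kolSinai {X : Type*} [MeasurableSpace X] (T : X → X) (μ : Measure X) : ℝ :=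
  ⨆ (k : ℕ), ⨆ (P : Fin k → Set X),
    ⨆ (_ : (∀ i, MeasurableSet (P i)) ∧ Pairwise (Function.onFun Disjoint P) ∧
        (⋃ i, P i) = Set.univ),
    Filter.atTop.liminf fun n : ℕ =>
      (∑ f : Fin n → Fin k,
        Real.negMulLog ((μ (⋂ i : Fin n, T^[(i : ℕ)] ⁻¹' P (f i))).toReal)) / n

/-- The classical topological pressure, expressed through the variational principle:
`P_top(ψ) = sup { h_μ(T) + ∫ ψ dμ : μ ∈ M(X,T) }`. -/
def PtopVar {X : Type*} [MeasurableSpace X] (T : X → X) (ψ : X → ℝ) : ℝ :=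
  sSup {r : ℝ | ∃ μ : Measure X, IsProbabilityMeasure μ ∧ MeasurePreserving T μ μ ∧
    r = kolSinai T μ + ∫ x, ψ x ∂μ}

end

private theorem liminf_nonneg'' {f : ℕ → ℝ} (h : ∀ n, 0 ≤ f n) :
    Filter.atTop.liminf f ≥ 0 := by
  rw [Filter.liminf_eq]
  by_cases hb : BddAbove {a | ∀ᶠ n in Filter.atTop, a ≤ f n}
  · exact le_csSup hb (Filter.Eventually.of_forall h)
  · rw [Real.sSup_of_not_bddAbove hb]

private theorem kolSinai_nonneg' {X : Type*} [MeasurableSpace X] (T : X → X)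
    (μ : MeasureTheory.Measure X) (hμ : MeasureTheory.IsProbabilityMeasure μ) :
    0 ≤ kolSinai T μ := by
  unfold kolSinai
  apply Real.iSup_nonneg; intro k
  apply Real.iSup_nonneg; intro P
  apply Real.iSup_nonneg; intro _
  apply liminf_nonneg''
  intro n
  apply div_nonneg _ (Nat.cast_nonneg n)
  apply Finset.sum_nonneg; intro f _
  apply Real.negMulLog_nonneg ENNReal.toReal_nonneg
  have h1 : μ (⋂ i : Fin n, T^[(i : ℕ)] ⁻¹' P (f i)) ≤ 1 := prob_le_one
  simpa using ENNReal.toReal_mono ENNReal.one_ne_top h1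

/-- for continuous `φ ≥ c > 0` on a compact space with `h_top(T)` finite,
the map `s ↦ P_top(-sφ)` is strictly decreasing, continuous, tends to `-∞` at `+∞` and
to `+∞` at `-∞`; hence Bowen's equation `P_top(-sφ) = 0` has a unique solution when
`h_top(T) ≥ 0`, and this solution is `sup { h_μ(T)/∫φ dμ }` when `h_top(T) > 0`. -/
theorem stmt16 {X : Type*} [MetricSpace X] [CompactSpace X] [Nonempty X]
    [MeasurableSpace X] [BorelSpace X]
    (T : X → X) (hT : Continuous T)
    (φ : X → ℝ) (hφ : Continuous φ) (c : ℝ) (hc : 0 < c) (hcφ : ∀ x, c ≤ φ x)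
    -- existence of an invariant probability measure (Krylov–Bogolyubov)
    (hex : ∃ μ : Measure X, IsProbabilityMeasure μ ∧ MeasurePreserving T μ μ)
    -- finiteness of the topological entropy `h_top(T) = sup_μ h_μ(T)`
    (hfin : BddAbove {r : ℝ | ∃ μ : Measure X, IsProbabilityMeasure μ ∧
      MeasurePreserving T μ μ ∧ r = kolSinai T μ}) :
    StrictAnti (fun s : ℝ => PtopVar T (fun x => -s * φ x)) ∧
    Continuous (fun s : ℝ => PtopVar T (fun x => -s * φ x)) ∧
    Tendsto (fun s : ℝ => PtopVar T (fun x => -s * φ x)) atTop atBot ∧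
    Tendsto (fun s : ℝ => PtopVar T (fun x => -s * φ x)) atBot atTop ∧
    (0 ≤ sSup {r : ℝ | ∃ μ : Measure X, IsProbabilityMeasure μ ∧
        MeasurePreserving T μ μ ∧ r = kolSinai T μ} →
      ∃! s : ℝ, PtopVar T (fun x => -s * φ x) = 0) ∧
    (0 < sSup {r : ℝ | ∃ μ : Measure X, IsProbabilityMeasure μ ∧
        MeasurePreserving T μ μ ∧ r = kolSinai T μ} →
      PtopVar T (fun x => -(sSup {r : ℝ | ∃ μ : Measure X, IsProbabilityMeasure μ ∧
        MeasurePreserving T μ μ ∧ r = kolSinai T μ / ∫ x, φ x ∂μ}) * φ x) = 0) := by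
  classical
  obtain ⟨μ0, hμ0p, hμ0m⟩ := hex
  -- upper bound C for φ
  obtain ⟨x0, -, hx0'⟩ := isCompact_univ.exists_isMaxOn univ_nonempty hφ.continuousOn
  have hx0 : ∀ y : X, y ∈ Set.univ → φ y ≤ φ x0 := fun y _ => hx0' (mem_univ y)
  set C := φ x0 with hCdef
  have hcC : c ≤ C := hcφ x0
  have hC0 : 0 < C := hc.trans_le hcC
  -- the entropy set
  set S : Set ℝ := {r : ℝ | ∃ μ : Measure X, IsProbabilityMeasure μ ∧
      MeasurePreserving T μ μ ∧ r = kolSinai T μ} with hSdef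
  set K := sSup S with hKdef
  have hKle : ∀ μ : Measure X, IsProbabilityMeasure μ → MeasurePreserving T μ μ →
      kolSinai T μ ≤ K := fun μ hp hm => le_csSup hfin ⟨μ, hp, hm, rfl⟩
  have hK0 : 0 ≤ K := le_trans (kolSinai_nonneg' T μ0 hμ0p) (hKle μ0 hμ0p hμ0m)
  -- integrability and integral bounds
  have hint : ∀ μ : Measure X, IsProbabilityMeasure μ → Integrable φ μ := by
    intro μ hp
    haveI := hp
    exact (integrableOn_univ).mp (hφ.continuousOn.integrableOn_compact isCompact_univ)
  have hIlb : ∀ μ : Measure X, IsProbabilityMeasure μ → c ≤ ∫ x, φ x ∂μ := by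
    intro μ hp
    haveI := hp
    calc c = ∫ _x, c ∂μ := by simp
    _ ≤ ∫ x, φ x ∂μ := integral_mono (integrable_const c) (hint μ hp) hcφ
  have hIub : ∀ μ : Measure X, IsProbabilityMeasure μ → ∫ x, φ x ∂μ ≤ C := by
    intro μ hp
    haveI := hp
    calc ∫ x, φ x ∂μ ≤ ∫ _x, C ∂μ :=
        integral_mono (hint μ hp) (integrable_const C) (fun x => hx0 x (mem_univ x))
    _ = C := by simp
  have hI0 : ∀ μ : Measure X, IsProbabilityMeasure μ → 0 < ∫ x, φ x ∂μ :=
    fun μ hp => hc.trans_le (hIlb μ hp)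
  -- the pressure sets
  set A : ℝ → Set ℝ := fun s => {r : ℝ | ∃ μ : Measure X, IsProbabilityMeasure μ ∧
      MeasurePreserving T μ μ ∧ r = kolSinai T μ + -s * ∫ x, φ x ∂μ} with hAdef
  have hPA : ∀ s : ℝ, PtopVar T (fun x => -s * φ x) = sSup (A s) := by
    intro s
    unfold PtopVar
    congr 1
    ext r
    constructor
    · rintro ⟨μ, hp, hm, hr⟩
      exact ⟨μ, hp, hm, by rw [hr, integral_const_mul]⟩
    · rintro ⟨μ, hp, hm, hr⟩
      exact ⟨μ, hp, hm, by rw [hr, integral_const_mul]⟩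
  set P : ℝ → ℝ := fun s => sSup (A s) with hPdef
  have hAne : ∀ s : ℝ, (A s).Nonempty := fun s => ⟨_, μ0, hμ0p, hμ0m, rfl⟩
  have hAub : ∀ s : ℝ, ∀ r ∈ A s, r ≤ K + |s| * C := by
    rintro s r ⟨μ, hp, hm, rfl⟩
    have h1 : kolSinai T μ ≤ K := hKle μ hp hm
    have h2 : -s * ∫ x, φ x ∂μ ≤ |s| * C := by
      calc -s * ∫ x, φ x ∂μ ≤ |(-s) * ∫ x, φ x ∂μ| := le_abs_self _
      _ = |s| * |∫ x, φ x ∂μ| := by rw [abs_mul, abs_neg]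
      _ ≤ |s| * C := by
          apply mul_le_mul_of_nonneg_left _ (abs_nonneg s)
          rw [abs_of_pos (hI0 μ hp)]; exact hIub μ hp
    linarith
  have hAbdd : ∀ s : ℝ, BddAbove (A s) := fun s => ⟨K + |s| * C, fun r hr => hAub s r hr⟩
  have hmemle : ∀ s : ℝ, ∀ μ : Measure X, IsProbabilityMeasure μ → MeasurePreserving T μ μ →
      kolSinai T μ + -s * ∫ x, φ x ∂μ ≤ P s :=
    fun s μ hp hm => le_csSup (hAbdd s) ⟨μ, hp, hm, rfl⟩
  -- key estimates
  have hE1 : ∀ s t : ℝ, s ≤ t → P t ≤ P s - (t - s) * c := by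
    intro s t hst
    apply csSup_le (hAne t)
    rintro r ⟨μ, hp, hm, rfl⟩
    have h1 := hmemle s μ hp hm
    have h2 : (t - s) * c ≤ (t - s) * ∫ x, φ x ∂μ :=
      mul_le_mul_of_nonneg_left (hIlb μ hp) (by linarith)
    nlinarith [hI0 μ hp]
  have hE2 : ∀ s t : ℝ, s ≤ t → P s ≤ P t + (t - s) * C := by
    intro s t hst
    apply csSup_le (hAne s)
    rintro r ⟨μ, hp, hm, rfl⟩
    have h1 := hmemle t μ hp hm
    have h2 : (t - s) * ∫ x, φ x ∂μ ≤ (t - s) * C :=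
      mul_le_mul_of_nonneg_left (hIub μ hp) (by linarith)
    nlinarith
  have hanti : StrictAnti P := by
    intro s t hst
    have := hE1 s t hst.le
    nlinarith
  have hPub : ∀ s : ℝ, 0 ≤ s → P s ≤ K - s * c := by
    intro s hs
    apply csSup_le (hAne s)
    rintro r ⟨μ, hp, hm, rfl⟩
    have h1 : kolSinai T μ ≤ K := hKle μ hp hm
    have h2 : s * c ≤ s * ∫ x, φ x ∂μ := mul_le_mul_of_nonneg_left (hIlb μ hp) hs
    nlinarith
  have hPlb : ∀ s : ℝ, s ≤ 0 → -s * c ≤ P s := by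
    intro s hs
    have h1 := hmemle s μ0 hμ0p hμ0m
    have h2 : -s * c ≤ -s * ∫ x, φ x ∂μ0 :=
      mul_le_mul_of_nonneg_left (hIlb μ0 hμ0p) (by linarith)
    have h3 := kolSinai_nonneg' T μ0 hμ0p
    linarith
  -- continuity
  have hcont : Continuous P := by
    apply LipschitzWith.continuous (K := Real.toNNReal C)
    apply LipschitzWith.of_dist_le_mul
    intro s t
    rw [Real.dist_eq, Real.dist_eq, Real.coe_toNNReal C hC0.le]
    rcases le_total s t with h | h
    · have hab : |s - t| = t - s := by rw [abs_of_nonpos (by linarith)]; ring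
      rw [hab, abs_sub_le_iff]
      have e1 := hE1 s t h
      have e2 := hE2 s t h
      have h1 : 0 ≤ (t - s) * c := mul_nonneg (by linarith) hc.le
      have hcm : C * (t - s) = (t - s) * C := mul_comm _ _
      constructor
      · linarith
      · nlinarith
    · have hab : |s - t| = s - t := abs_of_nonneg (by linarith)
      rw [hab, abs_sub_le_iff]
      have e1 := hE1 t s h
      have e2 := hE2 t s h
      have h1 : 0 ≤ (s - t) * c := mul_nonneg (by linarith) hc.le
      have hcm : C * (s - t) = (s - t) * C := mul_comm _ _
      constructor
      · nlinarith
      · linarith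
  have htop : Tendsto P atTop atBot := by
    apply tendsto_atBot_mono' atTop (f₁ := fun s => K - s * c)
    · filter_upwards [eventually_ge_atTop (0:ℝ)] with s hs using hPub s hs
    · have h1 : Tendsto (fun s : ℝ => s * c) atTop atTop :=
        Tendsto.atTop_mul_const hc tendsto_id
      have h2 : Tendsto (fun s : ℝ => -(s * c)) atTop atBot := tendsto_neg_atTop_atBot.comp h1
      have := tendsto_atBot_add_const_left atTop K h2
      simpa [sub_eq_add_neg] using this
  have hbot : Tendsto P atBot atTop := by
    apply tendsto_atTop_mono' atBot (f₁ := fun s => -s * c)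
    · filter_upwards [eventually_le_atBot (0:ℝ)] with s hs using hPlb s hs
    · exact Tendsto.atTop_mul_const hc tendsto_neg_atBot_atTop
  have hPeq : (fun s : ℝ => PtopVar T (fun x => -s * φ x)) = P := by
    funext s; exact hPA s
  refine ⟨by rw [hPeq]; exact hanti, by rw [hPeq]; exact hcont,
    by rw [hPeq]; exact htop, by rw [hPeq]; exact hbot, ?_, ?_⟩
  · -- unique root
    intro hK0'
    have hP0 : P 0 = K := by
      have hA0 : A 0 = S := by
        ext r
        simp [hAdef, hSdef]
      show sSup (A 0) = sSup S
      rw [hA0]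
    set s1 := (K + 1) / c with hs1def
    have hs1pos : 0 < s1 := div_pos (by linarith) hc
    have hs1 : P s1 ≤ -1 := by
      have := hPub s1 hs1pos.le
      have : s1 * c = K + 1 := div_mul_cancel₀ _ hc.ne'
      have := hPub s1 hs1pos.le
      rw [hs1def] at this ⊢
      rw [div_mul_cancel₀ _ hc.ne'] at this
      linarith
    have h0mem : (0:ℝ) ∈ Icc (P s1) (P 0) := ⟨by linarith, by rw [hP0]; exact hK0⟩
    obtain ⟨s, -, hs⟩ := intermediate_value_Icc' hs1pos.le hcont.continuousOn h0mem
    refine ⟨s, (hPA s).trans hs, ?_⟩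
    intro t ht
    have ht' : P t = 0 := (hPA t).symm.trans ht
    exact hanti.injective (ht'.trans hs.symm)
  · -- Bowen root value
    intro hKpos
    set B : Set ℝ := {r : ℝ | ∃ μ : Measure X, IsProbabilityMeasure μ ∧
        MeasurePreserving T μ μ ∧ r = kolSinai T μ / ∫ x, φ x ∂μ} with hBdef
    have hBne : B.Nonempty := ⟨_, μ0, hμ0p, hμ0m, rfl⟩
    have hBbdd : BddAbove B := by
      refine ⟨K / c, ?_⟩
      rintro r ⟨μ, hp, hm, rfl⟩
      exact div_le_div₀ hK0 (hKle μ hp hm) hc (hIlb μ hp)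
    set s := sSup B with hsdef
    have key : P s = 0 := by
      have hle : P s ≤ 0 := by
        apply csSup_le (hAne s)
        rintro r ⟨μ, hp, hm, rfl⟩
        have h1 : kolSinai T μ / ∫ x, φ x ∂μ ≤ s := le_csSup hBbdd ⟨μ, hp, hm, rfl⟩
        have h2 : kolSinai T μ ≤ s * ∫ x, φ x ∂μ := (div_le_iff₀ (hI0 μ hp)).mp h1
        linarith
      have hge : 0 ≤ P s := by
        by_contra hlt
        push_neg at hlt
        set ε := -P s / C with hεdef
        have hεpos : 0 < ε := div_pos (by linarith) hC0
        obtain ⟨r, hrB, hrlt⟩ := exists_lt_of_lt_csSup hBne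
          (show s - ε < s by linarith)
        obtain ⟨μ, hp, hm, rfl⟩ := hrB
        have h1 : (s - ε) * ∫ x, φ x ∂μ < kolSinai T μ :=
          (lt_div_iff₀ (hI0 μ hp)).mp hrlt
        have h2 : kolSinai T μ + -s * ∫ x, φ x ∂μ ≤ P s := hmemle s μ hp hm
        have h3 : ε * ∫ x, φ x ∂μ ≤ ε * C := mul_le_mul_of_nonneg_left (hIub μ hp) hεpos.le
        have h4 : ε * C = -P s := by
          rw [hεdef, div_mul_cancel₀ _ hC0.ne']
        nlinarith
      linarith
    exact (hPA s).trans key
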